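/- Let $x_1, \dots, x_n \in \mathbb{R}^p$ with $S = \frac{1}{n}\sum_i x_i x_i^\top$ and $S_{-i} = S - \frac{1}{n} x_i x_i^\top$ both invertible, and let $\gamma = p/n < 1$. Then $\left| \frac{1}{p} x_i^\top S^{-1} x_i - 1 \right| \le (1-\gamma) \left| \frac{1}{p} x_i^\top S_{-i}^{-1} x_i - \frac{1}{1-\gamma} \right|$. -/

import Mathlib

open Matrix

/-- Sample covariance matrix `S = (1/n) ∑ xᵢ xᵢᵀ`. -/
noncomputable def sampleCov {n p : ℕ} (x : Fin n → Fin p → ℝ) : Matrix (Fin p) (Fin p) ℝ :=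
  (n : ℝ)⁻¹ • ∑ j, vecMulVec (x j) (x j)

/-- Leave-one-out sample covariance `S₋ᵢ = S - (1/n) xᵢ xᵢᵀ`. -/
noncomputable def sampleCovLoo {n p : ℕ} (x : Fin n → Fin p → ℝ) (i : Fin n) :
    Matrix (Fin p) (Fin p) ℝ :=
  sampleCov x - (n : ℝ)⁻¹ • vecMulVec (x i) (x i)

lemma vecMulVec_mulVec' {p : ℕ} (u v w : Fin p → ℝ) :
    vecMulVec u v *ᵥ w = (v ⬝ᵥ w) • u := by
  ext j
  simp [Matrix.mulVec, Matrix.vecMulVec_apply, dotProduct, Finset.mul_sum, mul_assoc,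
    mul_comm, mul_left_comm]

theorem stmt2 {n p : ℕ} (hn : 0 < n) (hp : 0 < p) (x : Fin n → Fin p → ℝ) (i : Fin n)
    (hS : IsUnit (sampleCov x).det) (hSi : IsUnit (sampleCovLoo x i).det)
    (hSipos : (sampleCovLoo x i).PosDef)
    (hγ : (p : ℝ) / n < 1) :
    |(p : ℝ)⁻¹ * (x i ⬝ᵥ ((sampleCov x)⁻¹ *ᵥ x i)) - 1|
      ≤ (1 - (p : ℝ) / n) *
          |(p : ℝ)⁻¹ * (x i ⬝ᵥ ((sampleCovLoo x i)⁻¹ *ᵥ x i)) - (1 - (p : ℝ) / n)⁻¹| := by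
  set A := sampleCovLoo x i with hA
  set S := sampleCov x with hSdef
  set u := x i with hu
  set t : ℝ := u ⬝ᵥ (A⁻¹ *ᵥ u) with ht
  have hnR : (0:ℝ) < n := by exact_mod_cast hn
  have hpR : (0:ℝ) < p := by exact_mod_cast hp
  have ht0 : 0 ≤ t := by
    have := hSipos.inv.posSemidef.re_dotProduct_nonneg u
    simpa [ht] using this
  have hd : (0:ℝ) < 1 + t / n := by positivity
  -- Sherman-Morrison: S *ᵥ (A⁻¹ *ᵥ u) = (1 + t/n) • u
  have hSA : S *ᵥ (A⁻¹ *ᵥ u) = (1 + t / n) • u := by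
    have hSsum : S = A + (n : ℝ)⁻¹ • vecMulVec u u := by
      rw [hA, sampleCovLoo, hSdef, hu, sub_add_cancel]
    rw [hSsum, Matrix.add_mulVec, Matrix.smul_mulVec, vecMulVec_mulVec',
      Matrix.mulVec_mulVec, Matrix.mul_nonsing_inv _ hSi, Matrix.one_mulVec]
    rw [← ht]
    ext j
    simp [Pi.add_apply, Pi.smul_apply, smul_eq_mul]
    ring
  have hinv : A⁻¹ *ᵥ u = (1 + t / n) • (S⁻¹ *ᵥ u) := by
    calc A⁻¹ *ᵥ u = (S⁻¹ * S) *ᵥ (A⁻¹ *ᵥ u) := by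
          rw [Matrix.nonsing_inv_mul _ hS, Matrix.one_mulVec]
      _ = S⁻¹ *ᵥ (S *ᵥ (A⁻¹ *ᵥ u)) := by rw [← Matrix.mulVec_mulVec]
      _ = S⁻¹ *ᵥ ((1 + t / n) • u) := by rw [hSA]
      _ = (1 + t / n) • (S⁻¹ *ᵥ u) := by rw [Matrix.mulVec_smul]
  have hmul : t = (1 + t / n) * (u ⬝ᵥ (S⁻¹ *ᵥ u)) := by
    conv_lhs => rw [ht, hinv]
    rw [dotProduct_smul, smul_eq_mul]
  have hkey : u ⬝ᵥ (S⁻¹ *ᵥ u) = t / (1 + t / n) := by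
    rw [eq_div_iff (ne_of_gt hd), mul_comm]
    exact hmul.symm
  rw [hkey]
  -- pure arithmetic
  set γ : ℝ := (p : ℝ) / n with hγdef
  have h1γ : 0 < 1 - γ := by linarith
  have e1 : (p:ℝ)⁻¹ * (t / (1 + t / n)) - 1 = (t * (1 - γ) - p) / (p * (1 + t / n)) := by
    simp only [hγdef]
    field_simp
    ring
  have e2 : (p:ℝ)⁻¹ * t - (1 - γ)⁻¹ = (t * (1 - γ) - p) / (p * (1 - γ)) := by
    field_simp
  rw [e1, e2, ht]
  rw [abs_div, abs_div]
  rw [abs_of_pos (by positivity : (0:ℝ) < p * (1 + t / n)),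
    abs_of_pos (by positivity : (0:ℝ) < p * (1 - γ))]
  have hrw : (1 - γ) * (|t * (1 - γ) - ↑p| / (↑p * (1 - γ))) = |t * (1 - γ) - ↑p| / ↑p := by
    field_simp
  rw [hrw]
  gcongr
  exact le_mul_of_one_le_right hpR.le (by linarith [div_nonneg ht0 hnR.le])
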